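/- (Implicit characterization used in Claim of Lemma on moving spaces.) Let P, v, w be as follows: P invertible on a d-dimensional space, v, w unit vectors with ‖Pv‖ ≤ s_i(P) and ‖Pw‖ ≥ s_{i+1}(P). Write P = A_{m-1}···A_0 as a product of m invertible maps each with ‖A_j^{±1}‖ ≤ C. If for every ℓ with 0 ≤ ℓ ≤ m−k the ratio (‖A^{k+ℓ}w‖/‖A^ℓw‖)/(‖A^{k+ℓ}v‖/‖A^ℓv‖) ≤ 1/2 (where A^j denotes the partial product A_{j-1}···A_0), then s_{i+1}(P)/s_i(P) ≤ (1/2)^{⌊m/k⌋} C^{2k}. -/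

import Mathlib

open scoped BigOperators

/-- The singular values of a real matrix, in decreasing order:
`sValSorted A 0` is the largest singular value. -/
noncomputable def sValSorted {d : ℕ} (A : Matrix (Fin d) (Fin d) ℝ) : Fin d → ℝ :=
  fun i =>
    Real.sqrt
      (((Matrix.isHermitian_conjTranspose_mul_self A).eigenvalues ∘
        Tuple.sort (Matrix.isHermitian_conjTranspose_mul_self A).eigenvalues) i.rev)

/-- `lamA A i = λ_i(A) = log s_i(A)` (1-indexed, `1 ≤ i ≤ d`). -/
noncomputable def lamA {d : ℕ} (A : Matrix (Fin d) (Fin d) ℝ) (i : ℕ) : ℝ :=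
  if h : 1 ≤ i ∧ i ≤ d then Real.log (sValSorted A ⟨i - 1, by omega⟩) else 0

/-- `sigmaA A i = σ_i(A) = λ_1(A) + ⋯ + λ_i(A)`, with `σ_0 = 0`. -/
noncomputable def sigmaA {d : ℕ} (A : Matrix (Fin d) (Fin d) ℝ) (i : ℕ) : ℝ :=
  ∑ j ∈ Finset.Icc 1 i, lamA A j

/-- `zetaA A = ζ(A) = σ_1 + ⋯ + σ_{d-1} - ((d-1)/2) σ_d`. -/
noncomputable def zetaA {d : ℕ} (A : Matrix (Fin d) (Fin d) ℝ) : ℝ :=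
  (∑ i ∈ Finset.Ico 1 d, sigmaA A i) - ((d - 1 : ℝ) / 2) * sigmaA A d

/-- `gammaA A i = γ_i(A) = (λ_i(A) - λ_{i+1}(A))/2`. -/
noncomputable def gammaA {d : ℕ} (A : Matrix (Fin d) (Fin d) ℝ) (i : ℕ) : ℝ :=
  (lamA A i - lamA A (i + 1)) / 2

/-- The partial products `A^j := A_{j-1} ⋯ A_0`, with `A^0 = id`. -/
noncomputable def pProd {d : ℕ} (A : ℕ → Matrix (Fin d) (Fin d) ℝ) : ℕ → Matrix (Fin d) (Fin d) ℝ
  | 0 => 1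
  | (j + 1) => A j * pProd A j

/-- if along every window of length `k` the expansion of `w` never beats half
the expansion of `v`, then the gap between the `i`-th and `(i+1)`-th singular values of the
full product `P = A_{m-1} ⋯ A_0` satisfies `s_{i+1}(P)/s_i(P) ≤ (1/2)^{⌊m/k⌋} C^{2k}`.
Here `i j : Fin d` with `(j:ℕ) = i + 1` encode consecutive (0-indexed) singular value indices,
so `sValSorted P i = s_i(P)` and `sValSorted P j = s_{i+1}(P)` in the paper's 1-indexed
notation. -/
theorem singular_value_gap_of_no_exchange {d m k : ℕ} (hk : 0 < k) (hkm : k ≤ m) (C : ℝ)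
    (A : ℕ → Matrix (Fin d) (Fin d) ℝ)
    (hinv : ∀ j < m, IsUnit (A j))
    (hnorm : ∀ j < m, ‖Matrix.toEuclideanCLM (𝕜 := ℝ) (A j)‖ ≤ C)
    (hnorminv : ∀ j < m, ‖Matrix.toEuclideanCLM (𝕜 := ℝ) (A j)⁻¹‖ ≤ C)
    (v w : EuclideanSpace ℝ (Fin d)) (hv : ‖v‖ = 1) (hw : ‖w‖ = 1)
    (i j : Fin d) (hij : (j : ℕ) = (i : ℕ) + 1)
    (hPv : ‖Matrix.toEuclideanCLM (𝕜 := ℝ) (pProd A m) v‖ ≤ sValSorted (pProd A m) i)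
    (hPw : sValSorted (pProd A m) j ≤ ‖Matrix.toEuclideanCLM (𝕜 := ℝ) (pProd A m) w‖)
    (hratio : ∀ ℓ, ℓ ≤ m - k →
      (‖Matrix.toEuclideanCLM (𝕜 := ℝ) (pProd A (k + ℓ)) w‖ /
          ‖Matrix.toEuclideanCLM (𝕜 := ℝ) (pProd A ℓ) w‖) /
        (‖Matrix.toEuclideanCLM (𝕜 := ℝ) (pProd A (k + ℓ)) v‖ /
          ‖Matrix.toEuclideanCLM (𝕜 := ℝ) (pProd A ℓ) v‖) ≤ 1 / 2) :
    sValSorted (pProd A m) j / sValSorted (pProd A m) i ≤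
      (1 / 2 : ℝ) ^ (m / k) * C ^ (2 * k) := by
  classical
  have hd : 0 < d := i.pos
  set T : ℕ → EuclideanSpace ℝ (Fin d) →L[ℝ] EuclideanSpace ℝ (Fin d) :=
    fun ℓ => Matrix.toEuclideanCLM (𝕜 := ℝ) (pProd A ℓ) with hT
  have hT0 : ∀ x : EuclideanSpace ℝ (Fin d), T 0 x = x := by
    intro x; simp [hT, pProd]
  have hstep : ∀ n, n < m → ∀ x, T (n+1) x = Matrix.toEuclideanCLM (𝕜 := ℝ) (A n) (T n x) := by
    intro n hn x
    simp [hT, pProd, map_mul, ContinuousLinearMap.mul_apply]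
  have hstep' : ∀ n, n < m → ∀ x, T n x = Matrix.toEuclideanCLM (𝕜 := ℝ) ((A n)⁻¹) (T (n+1) x) := by
    intro n hn x
    rw [hstep n hn x, ← ContinuousLinearMap.mul_apply, ← map_mul,
        Matrix.nonsing_inv_mul _ ((Matrix.isUnit_iff_isUnit_det _).mp (hinv n hn))]
    simp
  have hC0 : 0 ≤ C := le_trans (norm_nonneg _) (hnorm 0 (lt_of_lt_of_le hk hkm))
  have hup : ∀ n, n < m → ∀ x, ‖T (n+1) x‖ ≤ C * ‖T n x‖ := by
    intro n hn x
    rw [hstep n hn x]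
    exact le_trans ((Matrix.toEuclideanCLM (𝕜 := ℝ) (A n)).le_opNorm _)
      (mul_le_mul_of_nonneg_right (hnorm n hn) (norm_nonneg _))
  have hdown : ∀ n, n < m → ∀ x, ‖T n x‖ ≤ C * ‖T (n+1) x‖ := by
    intro n hn x
    rw [hstep' n hn x]
    exact le_trans ((Matrix.toEuclideanCLM (𝕜 := ℝ) ((A n)⁻¹)).le_opNorm _)
      (mul_le_mul_of_nonneg_right (hnorminv n hn) (norm_nonneg _))
  have hup_many : ∀ t n, n + t ≤ m → ∀ x, ‖T (n+t) x‖ ≤ C ^ t * ‖T n x‖ := by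
    intro t
    induction t with
    | zero => intro n _ x; simp
    | succ t ih =>
      intro n hn x
      have h1 : ‖T (n+t+1) x‖ ≤ C * ‖T (n+t) x‖ := hup (n+t) (by omega) x
      have h2 := ih n (by omega) x
      calc ‖T (n+(t+1)) x‖ = ‖T (n+t+1) x‖ := by ring_nf
        _ ≤ C * ‖T (n+t) x‖ := h1
        _ ≤ C * (C ^ t * ‖T n x‖) := mul_le_mul_of_nonneg_left h2 hC0
        _ = C ^ (t+1) * ‖T n x‖ := by ring
  have hdown_many : ∀ t n, n + t ≤ m → ∀ x, ‖T n x‖ ≤ C ^ t * ‖T (n+t) x‖ := by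
    intro t
    induction t with
    | zero => intro n _ x; simp
    | succ t ih =>
      intro n hn x
      have h1 : ‖T (n+t) x‖ ≤ C * ‖T (n+t+1) x‖ := hdown (n+t) (by omega) x
      have h2 := ih n (by omega) x
      calc ‖T n x‖ ≤ C ^ t * ‖T (n+t) x‖ := h2
        _ ≤ C ^ t * (C * ‖T (n+t+1) x‖) :=
            mul_le_mul_of_nonneg_left h1 (pow_nonneg hC0 t)
        _ = C ^ (t+1) * ‖T (n+(t+1)) x‖ := by ring_nf
  have hC1 : 1 ≤ C := by
    have h1 : ‖T 0 v‖ = 1 := by rw [hT0]; exact hv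
    have h2 := hdown 0 (lt_of_lt_of_le hk hkm) v
    have h3 := hup 0 (lt_of_lt_of_le hk hkm) v
    nlinarith [norm_nonneg (T 1 v)]
  have hCpos : 0 < C := lt_of_lt_of_le one_pos hC1
  have hpos : ∀ ℓ, ℓ ≤ m → ∀ x : EuclideanSpace ℝ (Fin d), ‖x‖ = 1 → 0 < ‖T ℓ x‖ := by
    intro ℓ hℓ x hx
    have h1 := hdown_many ℓ 0 (by omega) x
    rw [hT0, hx] at h1
    simp only [zero_add] at h1
    nlinarith [pow_pos hCpos ℓ, norm_nonneg (T ℓ x)]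
  -- chain along blocks
  have hchain : ∀ n, n * k ≤ m → ‖T (n*k) w‖ / ‖T (n*k) v‖ ≤ (1/2 : ℝ) ^ n := by
    intro n
    induction n with
    | zero => intro _; simp [hT0, hv, hw]
    | succ n ih =>
      intro hn
      have hn' : n * k + k ≤ m := by rw [add_mul, one_mul] at hn; omega
      have hnk : n * k ≤ m := by omega
      have ihh := ih hnk
      have hr := hratio (n*k) (by omega)
      have hb : 0 < ‖T (n*k) w‖ := hpos _ hnk w hw
      have hc : 0 < ‖T (k + n*k) v‖ := hpos _ (by omega) v hv
      have hdpos : 0 < ‖T (n*k) v‖ := hpos _ hnk v hv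
      have heq : (‖T (k + n*k) w‖ / ‖T (n*k) w‖) / (‖T (k + n*k) v‖ / ‖T (n*k) v‖)
          = (‖T (k + n*k) w‖ / ‖T (k + n*k) v‖) / (‖T (n*k) w‖ / ‖T (n*k) v‖) :=
        div_div_div_comm _ _ _ _
      rw [heq] at hr
      have hbd : 0 < ‖T (n*k) w‖ / ‖T (n*k) v‖ := div_pos hb hdpos
      rw [div_le_iff₀ hbd] at hr
      have hkey : ‖T (k + n*k) w‖ / ‖T (k + n*k) v‖ ≤ (1/2 : ℝ) * (1/2 : ℝ) ^ n := by
        calc ‖T (k + n*k) w‖ / ‖T (k + n*k) v‖ ≤ 1/2 * (‖T (n*k) w‖ / ‖T (n*k) v‖) := hr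
          _ ≤ 1/2 * (1/2 : ℝ)^n := by linarith
      have hidx : (n+1) * k = k + n * k := by ring
      rw [hidx]
      calc ‖T (k + n*k) w‖ / ‖T (k + n*k) v‖ ≤ (1/2 : ℝ) * (1/2 : ℝ)^n := hkey
        _ = (1/2 : ℝ)^(n+1) := by ring
  -- remainder
  set r := m / k with hr
  set t := m - r * k with ht
  have hrk : r * k ≤ m := Nat.div_mul_le_self m k
  have hmeq2 : r * k + m % k = m := by rw [hr, mul_comm]; exact Nat.div_add_mod m k
  have htk : t < k := by
    have hmod := Nat.mod_lt m hk
    omega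
  have hmeq : r * k + t = m := by omega
  have hnum : ‖T m w‖ ≤ C ^ t * ‖T (r*k) w‖ := by
    have := hup_many t (r*k) (by omega) w
    rwa [hmeq] at this
  have hden : ‖T (r*k) v‖ ≤ C ^ t * ‖T m v‖ := by
    have := hdown_many t (r*k) (by omega) v
    rwa [hmeq] at this
  have hCt : (0:ℝ) < C ^ t := pow_pos hCpos t
  have hposmv : 0 < ‖T m v‖ := hpos m le_rfl v hv
  have hposrv : 0 < ‖T (r*k) v‖ := hpos _ hrk v hv
  have hstep2 : ‖T m w‖ / ‖T m v‖ ≤ (C ^ t * ‖T (r*k) w‖) / (‖T (r*k) v‖ / C ^ t) := by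
    apply div_le_div₀ (mul_nonneg (le_of_lt hCt) (norm_nonneg _)) hnum
      (div_pos hposrv hCt)
    rw [div_le_iff₀ hCt]
    linarith [mul_comm (‖T m v‖) (C ^ t)]
  have hstep3 : (C ^ t * ‖T (r*k) w‖) / (‖T (r*k) v‖ / C ^ t)
      = C ^ (2*t) * (‖T (r*k) w‖ / ‖T (r*k) v‖) := by
    field_simp
    ring
  have hchainr : ‖T (r*k) w‖ / ‖T (r*k) v‖ ≤ (1/2 : ℝ) ^ r := hchain r hrk
  have hCle : C ^ (2*t) ≤ C ^ (2*k) := pow_le_pow_right₀ hC1 (by omega)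
  have hfin : ‖T m w‖ / ‖T m v‖ ≤ (1/2 : ℝ) ^ r * C ^ (2*k) := by
    have h1 : ‖T m w‖ / ‖T m v‖ ≤ C ^ (2*t) * (‖T (r*k) w‖ / ‖T (r*k) v‖) := by
      rw [← hstep3]; exact hstep2
    have h2 : C ^ (2*t) * (‖T (r*k) w‖ / ‖T (r*k) v‖) ≤ C ^ (2*t) * (1/2:ℝ)^r :=
      mul_le_mul_of_nonneg_left hchainr (pow_nonneg hC0 _)
    have h3 : C ^ (2*t) * (1/2:ℝ)^r ≤ C ^ (2*k) * (1/2:ℝ)^r :=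
      mul_le_mul_of_nonneg_right hCle (pow_nonneg (by norm_num) r)
    calc ‖T m w‖ / ‖T m v‖ ≤ C ^ (2*t) * (‖T (r*k) w‖ / ‖T (r*k) v‖) := h1
      _ ≤ C ^ (2*t) * (1/2:ℝ)^r := h2
      _ ≤ C ^ (2*k) * (1/2:ℝ)^r := h3
      _ = (1/2:ℝ)^r * C ^ (2*k) := by ring
  calc sValSorted (pProd A m) j / sValSorted (pProd A m) i
      ≤ ‖T m w‖ / ‖T m v‖ :=
        div_le_div₀ (norm_nonneg _) hPw hposmv hPv
    _ ≤ (1/2 : ℝ) ^ r * C ^ (2*k) := hfin
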